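/- arXiv:2509.06363 — 2 statements merged into one kernel-verified Lean document; each statement's English description precedes it below -/
import Mathlib

section
/- Let m ≥ 3 be odd. The number of orbits of the action of the dihedral group D_m on {1,-1}^m equals (1/(2m)) · (2^m + 2·Σ_{i=1}^{(m-1)/2} 2^{gcd(i,m)}). -/
/-- The action of the dihedral group `D_m` on `{1,-1}^m` (tuples indexed by `ZMod m`,
with position `i ∈ {1,…,m}` identified with `(i : ZMod m)`), where the rotation
`r = r 1` acts by `r(δ₁,…,δₘ) = (δₘ, δ₁, …, δ_{m-1})` and the reflection `f = sr 0`
acts by `f(δ₁,…,δₘ) = (-δₘ, …, -δ₂, -δ₁)`, i.e. `f(δ)ᵢ = -δ_{m+1-i}`. -/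
def dact {m : ℕ} : DihedralGroup m → (ZMod m → ℤˣ) → (ZMod m → ℤˣ)
  | .r i, δ => fun j => δ (j - i)
  | .sr i, δ => fun j => -δ (1 - i - j)

/-- The orbit of `δ` under the action of the dihedral group on `{1,-1}^m`. -/
def dihedralOrbit {m : ℕ} (δ : ZMod m → ℤˣ) : Set (ZMod m → ℤˣ) :=
  {δ' | ∃ σ : DihedralGroup m, dact σ δ = δ'}

instance dihedralMulAction {m : ℕ} : MulAction (DihedralGroup m) (ZMod m → ℤˣ) where
  smul := dact
  one_smul δ := by
    show dact (.r 0) δ = δ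
    funext j; simp [dact]
  mul_smul g h δ := by
    show dact (g * h) δ = dact g (dact h δ)
    rcases g with i | i <;> rcases h with j | j <;> funext k <;>
      simp only [DihedralGroup.r_mul_r, DihedralGroup.r_mul_sr, DihedralGroup.sr_mul_r,
        DihedralGroup.sr_mul_sr, dact, neg_neg] <;> ring_nf

lemma dihedralOrbit_eq {m : ℕ} (δ : ZMod m → ℤˣ) :
    dihedralOrbit δ = MulAction.orbit (DihedralGroup m) δ := by
  ext δ'
  rw [MulAction.mem_orbit_iff]
  exact Iff.rfl

lemma shift_nat {m : ℕ} {δ : ZMod m → ℤˣ} {a : ZMod m} (h : ∀ j, δ (j + a) = δ j) :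
    ∀ (t : ℕ) (j : ZMod m), δ (j + t • a) = δ j := by
  intro t
  induction t with
  | zero => simp
  | succ n ih =>
    intro j
    rw [succ_nsmul, ← add_assoc, h, ih]

lemma shift_int {m : ℕ} {δ : ZMod m → ℤˣ} {a : ZMod m} (h : ∀ j, δ (j + a) = δ j) :
    ∀ (t : ℤ) (j : ZMod m), δ (j + t • a) = δ j := by
  intro t j
  rcases t.eq_nat_or_neg with ⟨n, rfl | rfl⟩
  · rw [natCast_zsmul]; exact shift_nat h n j
  · have h2 := shift_nat h n (j - n • a)
    rw [sub_add_cancel] at h2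
    rw [neg_zsmul, natCast_zsmul, ← sub_eq_add_neg, ← h2]

lemma inv_iff_gcd {m : ℕ} [NeZero m] (i : ZMod m) (δ : ZMod m → ℤˣ) :
    (∀ j, δ (j + i) = δ j) ↔ (∀ j, δ (j + ((Nat.gcd i.val m : ℕ) : ZMod m)) = δ j) := by
  set d := Nat.gcd i.val m with hd
  constructor
  · intro h j
    have bez : ((d : ℤ) : ZMod m) = (Nat.gcdA i.val m : ℤ) • i := by
      rw [hd, Nat.gcd_eq_gcd_ab]
      push_cast
      rw [ZMod.natCast_self]
      rw [ZMod.natCast_val, ZMod.cast_id]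
      rw [zsmul_eq_mul]; ring
    have := shift_int h (Nat.gcdA i.val m) j
    rw [← bez] at this
    simpa using this
  · intro h j
    have hi : i = (i.val / d) • ((d : ℕ) : ZMod m) := by
      rw [nsmul_eq_mul, ← Nat.cast_mul, Nat.div_mul_cancel (Nat.gcd_dvd_left _ _),
        ZMod.natCast_val, ZMod.cast_id]
    have := shift_nat h (i.val / d) j
    rw [← hi] at this
    exact this

noncomputable def fixEquiv (m d : ℕ) [NeZero m] [NeZero d] (hd : d ∣ m) :
    {δ : ZMod m → ℤˣ // ∀ j, δ (j + (d : ZMod m)) = δ j} ≃ (ZMod d → ℤˣ) where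
  toFun δ := fun k => δ.1 ((k.val : ZMod m))
  invFun ε := ⟨fun j => ε (ZMod.castHom hd (ZMod d) j), by
    intro j
    simp [map_add, map_natCast]⟩
  left_inv := by
    rintro ⟨δ, hδ⟩
    apply Subtype.ext
    funext j
    show δ (((ZMod.castHom hd (ZMod d)) j).val : ZMod m) = δ j
    have key := shift_nat hδ (j.val / d) ((j.val % d : ℕ) : ZMod m)
    have harg : ((j.val % d : ℕ) : ZMod m) + (j.val / d) • (d : ZMod m) = j := by
      rw [nsmul_eq_mul, ← Nat.cast_mul, ← Nat.cast_add, Nat.mod_add_div',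
        ZMod.natCast_val, ZMod.cast_id]
    rw [harg] at key
    have hv : ((ZMod.castHom hd (ZMod d)) j).val = j.val % d := by
      rw [ZMod.castHom_apply, ← ZMod.natCast_val j, ZMod.val_natCast]
    rw [hv]
    exact key.symm
  right_inv := by
    intro ε
    funext k
    show ε ((ZMod.castHom hd (ZMod d)) ((k.val : ℕ) : ZMod m)) = ε k
    rw [map_natCast, ZMod.natCast_val, ZMod.cast_id]

lemma card_fixedBy_r (m : ℕ) [NeZero m] (i : ZMod m) :
    Nat.card (MulAction.fixedBy (ZMod m → ℤˣ) (DihedralGroup.r i)) =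
      2 ^ (Nat.gcd i.val m) := by
  set d := Nat.gcd i.val m with hd
  haveI : NeZero d := ⟨(Nat.gcd_pos_of_pos_right _ (Nat.pos_of_ne_zero (NeZero.ne m))).ne'⟩
  have hmem : ∀ δ : ZMod m → ℤˣ, δ ∈ MulAction.fixedBy (ZMod m → ℤˣ) (DihedralGroup.r i) ↔
      ∀ j, δ (j + (d : ZMod m)) = δ j := by
    intro δ
    rw [MulAction.mem_fixedBy]
    have : (DihedralGroup.r i • δ = δ) ↔ ∀ j, δ (j + i) = δ j := by
      constructor
      · intro h j
        rw [show (DihedralGroup.r i • δ) = dact (.r i) δ from rfl] at h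
        have := congrFun h (j + i)
        simp only [dact, add_sub_cancel_right] at this
        exact this.symm
      · intro h
        funext j
        show δ (j - i) = δ j
        have := h (j - i)
        rw [sub_add_cancel] at this
        exact this.symm
    rw [this, inv_iff_gcd]
  have e1 : MulAction.fixedBy (ZMod m → ℤˣ) (DihedralGroup.r i) ≃
      {δ : ZMod m → ℤˣ // ∀ j, δ (j + (d : ZMod m)) = δ j} :=
    Equiv.subtypeEquivRight hmem
  rw [Nat.card_congr (e1.trans (fixEquiv m d (Nat.gcd_dvd_right _ _))), Nat.card_fun]
  simp [Nat.card_eq_fintype_card, ZMod.card]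

lemma fixedBy_sr (m : ℕ) (hodd : Odd m) [NeZero m] (i : ZMod m) :
    Nat.card (MulAction.fixedBy (ZMod m → ℤˣ) (DihedralGroup.sr i)) = 0 := by
  have hE : MulAction.fixedBy (ZMod m → ℤˣ) (DihedralGroup.sr i) = ∅ := by
    rw [Set.eq_empty_iff_forall_notMem]
    intro δ h
    rw [MulAction.mem_fixedBy] at h
    have h2 : ((2 * ((m + 1) / 2) : ℕ) : ZMod m) = 1 := by
      have : 2 * ((m + 1) / 2) = m + 1 := by
        obtain ⟨k, hk⟩ := hodd; omega
      rw [this]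
      push_cast
      simp
    set c : ZMod m := (((m + 1) / 2 : ℕ) : ZMod m) with hc
    have h2' : 2 * c = 1 := by rw [hc, ← h2]; push_cast; ring
    set j := c * (1 - i) with hj
    have hfix : 1 - i - j = j := by
      rw [hj]
      linear_combination (i - 1) * h2'
    have := congrFun h j
    rw [show DihedralGroup.sr i • δ = dact (DihedralGroup.sr i) δ from rfl] at this
    simp only [dact] at this
    rw [hfix] at this
    rcases Int.units_eq_one_or (δ j) with h1 | h1 <;> rw [h1] at this <;> simp at this
  rw [hE]
  simp

def dihedralSumEquiv (m : ℕ) : (ZMod m) ⊕ (ZMod m) ≃ DihedralGroup m where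
  toFun := Sum.elim DihedralGroup.r DihedralGroup.sr
  invFun g := match g with
    | .r i => .inl i
    | .sr i => .inr i
  left_inv := by rintro (i | i) <;> rfl
  right_inv := by rintro (i | i) <;> rfl

lemma gcd_sub (m j : ℕ) (hj : j ≤ m) : Nat.gcd (m - j) m = Nat.gcd j m := by
  rw [Nat.gcd_comm, ← Nat.gcd_sub_self_left (Nat.sub_le m j), Nat.sub_sub_self hj,
    Nat.gcd_sub_self_right hj]

/-- For odd `m ≥ 3`, the number of orbits of the dihedral action on `{1,-1}^m` equals
`(1/(2m)) · (2^m + 2·Σ_{i=1}^{(m-1)/2} 2^{gcd(i,m)})`. -/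
theorem orbit_count_odd (m : ℕ) (hm : 3 ≤ m) (hodd : Odd m) :
    (Set.ncard (Set.range (dihedralOrbit (m := m))) : ℚ) =
      (1 / (2 * m)) *
        (2 ^ m + 2 * ∑ i ∈ Finset.Icc 1 ((m - 1) / 2), (2 : ℚ) ^ Nat.gcd i m) := by
  haveI : NeZero m := ⟨by omega⟩
  classical
  -- the number of orbits
  set N := Nat.card (Quotient (MulAction.orbitRel (DihedralGroup m) (ZMod m → ℤˣ))) with hN
  -- the range of `dihedralOrbit` is in bijection with the orbit quotient
  have hncard : Set.ncard (Set.range (dihedralOrbit (m := m))) = N := by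
    rw [← Nat.card_coe_set_eq]
    refine Nat.card_congr (Equiv.ofBijective
      (Quotient.lift
        (fun δ => (⟨dihedralOrbit δ, δ, rfl⟩ : Set.range (dihedralOrbit (m := m)))) ?_)
      ⟨?_, ?_⟩).symm
    · intro a b hab
      have : a ∈ MulAction.orbit (DihedralGroup m) b := hab
      apply Subtype.ext
      show dihedralOrbit a = dihedralOrbit b
      rw [dihedralOrbit_eq, dihedralOrbit_eq]
      exact MulAction.orbit_eq_iff.mpr this
    · intro x y
      induction x using Quotient.inductionOn with | h a =>
      induction y using Quotient.inductionOn with | h b =>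
      intro hxy
      apply Quotient.sound
      have : dihedralOrbit a = dihedralOrbit b := congrArg Subtype.val hxy
      rw [dihedralOrbit_eq, dihedralOrbit_eq] at this
      exact MulAction.orbit_eq_iff.mp this
    · rintro ⟨s, δ, rfl⟩
      exact ⟨⟦δ⟧, rfl⟩
  -- Burnside
  haveI : Fintype (Quotient (MulAction.orbitRel (DihedralGroup m) (ZMod m → ℤˣ))) :=
    Fintype.ofFinite _
  haveI : ∀ g : DihedralGroup m, Fintype (MulAction.fixedBy (ZMod m → ℤˣ) g) :=
    fun _ => Fintype.ofFinite _
  have burn := MulAction.sum_card_fixedBy_eq_card_orbits_mul_card_group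
    (DihedralGroup m) (ZMod m → ℤˣ)
  rw [DihedralGroup.card] at burn
  -- compute the sum of fixed points
  have hsum : (∑ g : DihedralGroup m,
      Fintype.card (MulAction.fixedBy (ZMod m → ℤˣ) g)) =
      ∑ i : ZMod m, 2 ^ (Nat.gcd i.val m) := by
    rw [← (dihedralSumEquiv m).sum_comp
      (fun g => Fintype.card (MulAction.fixedBy (ZMod m → ℤˣ) g)), Fintype.sum_sum_type]
    have h1 : ∀ i : ZMod m,
        Fintype.card (MulAction.fixedBy (ZMod m → ℤˣ) ((dihedralSumEquiv m) (Sum.inl i))) =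
        2 ^ (Nat.gcd i.val m) := by
      intro i
      rw [← Nat.card_eq_fintype_card]
      exact card_fixedBy_r m i
    have h2 : ∀ i : ZMod m,
        Fintype.card (MulAction.fixedBy (ZMod m → ℤˣ) ((dihedralSumEquiv m) (Sum.inr i))) =
        0 := by
      intro i
      rw [← Nat.card_eq_fintype_card]
      exact fixedBy_sr m hodd i
    simp only [h1, h2]
    simp
  -- rewrite the ZMod sum as a sum over `range m`
  have hzmod : (∑ i : ZMod m, 2 ^ (Nat.gcd i.val m)) =
      ∑ j ∈ Finset.range m, 2 ^ (Nat.gcd j m) := by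
    refine Finset.sum_nbij' (fun i => i.val) (fun j => (j : ZMod m)) ?_ ?_ ?_ ?_ ?_
    · intro i _
      exact Finset.mem_range.mpr (ZMod.val_lt i)
    · intro j _
      exact Finset.mem_univ _
    · intro i _
      show ((i.val : ℕ) : ZMod m) = i
      rw [ZMod.natCast_val, ZMod.cast_id]
    · intro j hj
      show ((j : ZMod m)).val = j
      rw [ZMod.val_natCast, Nat.mod_eq_of_lt (Finset.mem_range.mp hj)]
    · intro i _
      rfl
  -- split off the `0` term and reflect
  obtain ⟨k, hk⟩ := hodd
  have hk2 : (m - 1) / 2 = k := by omega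
  have hnat : (∑ j ∈ Finset.range m, 2 ^ (Nat.gcd j m)) =
      2 ^ m + 2 * ∑ j ∈ Finset.Icc 1 ((m - 1) / 2), 2 ^ (Nat.gcd j m) := by
    rw [hk2]
    have hins : Finset.range m = insert 0 (Finset.Icc 1 (m - 1)) := by
      ext x
      simp only [Finset.mem_range, Finset.mem_insert, Finset.mem_Icc]
      omega
    rw [hins, Finset.sum_insert (by simp)]
    have hsplit : Finset.Icc 1 (m - 1) = Finset.Icc 1 k ∪ Finset.Icc (k + 1) (m - 1) := by
      ext x
      simp only [Finset.mem_Icc, Finset.mem_union]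
      omega
    have hdisj : Disjoint (Finset.Icc 1 k) (Finset.Icc (k + 1) (m - 1)) := by
      rw [Finset.disjoint_left]
      intro a ha hb
      simp only [Finset.mem_Icc] at ha hb
      omega
    rw [hsplit, Finset.sum_union hdisj]
    have hrefl : (∑ j ∈ Finset.Icc (k + 1) (m - 1), 2 ^ (Nat.gcd j m)) =
        ∑ j ∈ Finset.Icc 1 k, 2 ^ (Nat.gcd j m) := by
      refine Finset.sum_nbij' (fun j => m - j) (fun j => m - j) ?_ ?_ ?_ ?_ ?_
      · intro a ha
        simp only [Finset.mem_Icc] at ha ⊢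
        omega
      · intro a ha
        simp only [Finset.mem_Icc] at ha ⊢
        omega
      · intro a ha
        simp only [Finset.mem_Icc] at ha
        show m - (m - a) = a
        omega
      · intro a ha
        simp only [Finset.mem_Icc] at ha
        show m - (m - a) = a
        omega
      · intro a ha
        simp only [Finset.mem_Icc] at ha
        show (2:ℕ) ^ Nat.gcd a m = 2 ^ Nat.gcd (m - a) m
        rw [gcd_sub m a (by omega)]
    rw [hrefl, Nat.gcd_zero_left]
    ring
  -- put everything together over ℚ
  have key : (N : ℚ) * (2 * m) =
      2 ^ m + 2 * ∑ i ∈ Finset.Icc 1 ((m - 1) / 2), (2 : ℚ) ^ Nat.gcd i m := by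
    have : N * (2 * m) = 2 ^ m + 2 * ∑ j ∈ Finset.Icc 1 ((m - 1) / 2), 2 ^ (Nat.gcd j m) := by
      rw [hN, Nat.card_eq_fintype_card, ← burn, hsum, hzmod, hnat]
    exact_mod_cast congrArg (Nat.cast : ℕ → ℚ) this
  rw [hncard]
  have hm0 : (m : ℚ) ≠ 0 := Nat.cast_ne_zero.mpr (by omega)
  field_simp
  linear_combination key
end

section
/- Let m ≥ 1 and k ≥ 2. If Γ ⊆ D_m is a reversal-closed subset for δ ∈ {1,-1}^m, then the preimage π^{-1}(Γ) ⊆ D_{km} is a reversal-closed subset for the k-fold concatenation k(δ) ∈ {1,-1}^{km}. -/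
/-- `Γ ⊆ D_m` is reversal-closed for `δ ∈ {1,-1}^m` if for all `σ₁, σ₂ ∈ Γ` there
exists `σ₃ ∈ Γ` with `δ · σ₁(δ) · σ₂(δ) = σ₃(δ)`. -/
def ReversalClosed {m : ℕ} (Γ : Set (DihedralGroup m)) (δ : ZMod m → ℤˣ) : Prop :=
  ∀ σ₁ ∈ Γ, ∀ σ₂ ∈ Γ, ∃ σ₃ ∈ Γ, δ * dact σ₁ δ * dact σ₂ δ = dact σ₃ δ

/-- The group homomorphism `π : D_{km} → D_m` determined by `π(r) = r`, `π(f) = f`. -/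
def dihedralProj {m k : ℕ} : DihedralGroup (k * m) → DihedralGroup m
  | .r i => .r (ZMod.castHom (dvd_mul_left m k) (ZMod m) i)
  | .sr i => .sr (ZMod.castHom (dvd_mul_left m k) (ZMod m) i)

/-- The group homomorphism `ι : D_m → D_{km}` determined by `ι(r) = r^k`, `ι(f) = f`. -/
def dihedralIncl {m : ℕ} (k : ℕ) : DihedralGroup m → DihedralGroup (k * m)
  | .r i => .r ((k * i.val : ℕ) : ZMod (k * m))
  | .sr i => .sr ((k * i.val : ℕ) : ZMod (k * m))

/-- `k(δ) ∈ {1,-1}^{km}`: the concatenation of `k` copies of `δ ∈ {1,-1}^m`. -/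
def concatTuple {m : ℕ} (k : ℕ) (δ : ZMod m → ℤˣ) : ZMod (k * m) → ℤˣ :=
  fun j => δ (ZMod.castHom (dvd_mul_left m k) (ZMod m) j)

/-- `δ(k) ∈ {1,-1}^{km}`: the tuple in which each entry of `δ ∈ {1,-1}^m` is repeated
`k` times in place (position `p ∈ {1,…,km}` carries the value `δ_{⌈p/k⌉}`). -/
def repeatTuple {m : ℕ} (k : ℕ) (δ : ZMod m → ℤˣ) : ZMod (k * m) → ℤˣ :=
  fun j => δ ((((j - 1).val / k : ℕ) : ZMod m) + 1)

/-- If `Γ ⊆ D_m` is reversal-closed for `δ ∈ {1,-1}^m`, then `π⁻¹(Γ) ⊆ D_{km}` is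
reversal-closed for the `k`-fold concatenation `k(δ) ∈ {1,-1}^{km}`. -/
theorem preimage_reversal_closed_concat {m k : ℕ} (hm : 1 ≤ m) (hk : 2 ≤ k)
    (δ : ZMod m → ℤˣ) (Γ : Set (DihedralGroup m)) (hΓ : ReversalClosed Γ δ) :
    ReversalClosed (dihedralProj ⁻¹' Γ) (concatTuple k δ) := by
  haveI : NeZero m := ⟨by omega⟩
  have key : ∀ σ : DihedralGroup (k * m),
      dact σ (concatTuple k δ) = concatTuple k (dact (dihedralProj σ) δ) := by
    intro σ
    cases σ with
    | r i => funext j; simp [dact, concatTuple, dihedralProj, map_sub]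
    | sr i => funext j; simp [dact, concatTuple, dihedralProj, map_sub, map_one]
  have proj_lift : ∀ τ : DihedralGroup m, ∃ σ : DihedralGroup (k * m), dihedralProj σ = τ := by
    intro τ
    cases τ with
    | r i =>
      refine ⟨.r ((i.val : ℕ) : ZMod (k * m)), ?_⟩
      simp [dihedralProj, ZMod.natCast_val, ZMod.cast_id]
    | sr i =>
      refine ⟨.sr ((i.val : ℕ) : ZMod (k * m)), ?_⟩
      simp [dihedralProj, ZMod.natCast_val, ZMod.cast_id]
  intro σ₁ h₁ σ₂ h₂
  obtain ⟨τ₃, hτ₃, heq⟩ := hΓ _ h₁ _ h₂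
  obtain ⟨σ₃, hσ₃⟩ := proj_lift τ₃
  refine ⟨σ₃, by simp [Set.mem_preimage, hσ₃, hτ₃], ?_⟩
  rw [key σ₁, key σ₂, key σ₃, hσ₃, ← heq]
  rfl
end
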